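/- Under the linear-combination condition (Condition 7) and assuming θ̂ solves the empirical estimating equation, the model-imputed estimator and the model-assisted estimator coincide exactly: g(E_N[h_1(X_i;θ̂)]) − g(E_N[h_0(X_i;θ̂)]) = g(E_N^1[Y_i(θ̂)]) − g(E_N^0[Y_i(θ̂)]), where Y_i(θ) = Y_i − h_{Z_i}(X_i;θ) + E_N[h_{Z_i}(X_i;θ)] is the observed adjusted outcome. -/

import Mathlib

open Matrix

private lemma dot_sum' {p : ℕ} {ι : Type*} (q : Fin p → ℝ) (s : Finset ι)
    (f : ι → Fin p → ℝ) : q ⬝ᵥ ∑ i ∈ s, f i = ∑ i ∈ s, q ⬝ᵥ f i := by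
  simp only [dotProduct, Finset.sum_apply, Finset.mul_sum]
  exact Finset.sum_comm

/-- Under the linear-combination condition (Condition 7) and assuming `θ̂` solves the empirical
estimating equation, the model-imputed and model-assisted estimators coincide exactly:
`g(E_N[h1(Xᵢ;θ̂)]) − g(E_N[h0(Xᵢ;θ̂)]) = g(E_N^1[Yᵢ(θ̂)]) − g(E_N^0[Yᵢ(θ̂)])`, where
`Yᵢ(θ) = Yᵢ − h_{Zᵢ}(Xᵢ;θ) + E_N[h_{Zᵢ}(X;θ)]` is the observed adjusted outcome. -/
theorem model_imputed_eq_model_assisted {𝒳 Θ' : Type*} (p N : ℕ) (hN : 0 < N)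
    (ψ1 ψ0 : ℝ → 𝒳 → Θ' → (Fin p → ℝ)) (h1 h0 : 𝒳 → Θ' → ℝ)
    (q1 q0 : Θ' → (Fin p → ℝ)) (g : ℝ → ℝ)
    (hcond : ∀ (y : ℝ) (x : 𝒳) (θ : Θ'),
      q1 θ ⬝ᵥ ψ1 y x θ = y - h1 x θ ∧ q1 θ ⬝ᵥ ψ0 y x θ = 0 ∧
      q0 θ ⬝ᵥ ψ0 y x θ = y - h0 x θ ∧ q0 θ ⬝ᵥ ψ1 y x θ = 0)
    (Z : Fin N → Bool) (Y : Fin N → ℝ) (X : Fin N → 𝒳) (θhat : Θ')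
    (T : Finset (Fin N)) (C : Finset (Fin N))
    (hT : T = Finset.univ.filter fun i => Z i = true)
    (hC : C = Finset.univ.filter fun i => Z i = false)
    (hn1 : 0 < T.card) (hn0 : 0 < C.card)
    (heq : ((T.card : ℝ) / (N : ℝ)) • ((T.card : ℝ)⁻¹ • ∑ i ∈ T, ψ1 (Y i) (X i) θhat)
        + ((C.card : ℝ) / (N : ℝ)) • ((C.card : ℝ)⁻¹ • ∑ i ∈ C, ψ0 (Y i) (X i) θhat)
        = 0) :
    g ((∑ i, h1 (X i) θhat) / (N : ℝ)) - g ((∑ i, h0 (X i) θhat) / (N : ℝ))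
    = g ((∑ i ∈ T,
            (Y i - h1 (X i) θhat + (∑ j, h1 (X j) θhat) / (N : ℝ))) / (T.card : ℝ))
      - g ((∑ i ∈ C,
            (Y i - h0 (X i) θhat + (∑ j, h0 (X j) θhat) / (N : ℝ))) / (C.card : ℝ)) := by
  have hTc : (T.card : ℝ) ≠ 0 := by positivity
  have hCc : (C.card : ℝ) ≠ 0 := by positivity
  have hNc : (N : ℝ) ≠ 0 := by positivity
  set S1 := ∑ i ∈ T, ψ1 (Y i) (X i) θhat with hS1
  set S0 := ∑ i ∈ C, ψ0 (Y i) (X i) θhat with hS0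
  -- dot with q1
  have hd1 : q1 θhat ⬝ᵥ S1 = ∑ i ∈ T, (Y i - h1 (X i) θhat) := by
    rw [hS1, dot_sum']
    exact Finset.sum_congr rfl fun i _ => (hcond (Y i) (X i) θhat).1
  have hd10 : q1 θhat ⬝ᵥ S0 = 0 := by
    rw [hS0, dot_sum']
    refine Finset.sum_eq_zero fun i _ => (hcond (Y i) (X i) θhat).2.1
  have hd0 : q0 θhat ⬝ᵥ S0 = ∑ i ∈ C, (Y i - h0 (X i) θhat) := by
    rw [hS0, dot_sum']
    exact Finset.sum_congr rfl fun i _ => (hcond (Y i) (X i) θhat).2.2.1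
  have hd01 : q0 θhat ⬝ᵥ S1 = 0 := by
    rw [hS1, dot_sum']
    refine Finset.sum_eq_zero fun i _ => (hcond (Y i) (X i) θhat).2.2.2
  have key : ∀ q : Fin p → ℝ, q ⬝ᵥ (((T.card : ℝ) / (N : ℝ)) • ((T.card : ℝ)⁻¹ • S1)
      + ((C.card : ℝ) / (N : ℝ)) • ((C.card : ℝ)⁻¹ • S0)) = 0 := by
    intro q; rw [heq, dotProduct_zero]
  have h1key : (1 / (N : ℝ)) * (q1 θhat ⬝ᵥ S1) = 0 := by
    have := key (q1 θhat)
    rw [dotProduct_add, dotProduct_smul, dotProduct_smul, dotProduct_smul,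
      dotProduct_smul, hd10] at this
    field_simp at this ⊢
    simpa [smul_eq_mul, hTc, hCc, mul_comm, mul_left_comm, hN.ne'] using this
  have h0key : (1 / (N : ℝ)) * (q0 θhat ⬝ᵥ S0) = 0 := by
    have := key (q0 θhat)
    rw [dotProduct_add, dotProduct_smul, dotProduct_smul, dotProduct_smul,
      dotProduct_smul, hd01] at this
    field_simp at this ⊢
    simpa [smul_eq_mul, hTc, hCc, mul_comm, mul_left_comm, hN.ne'] using this
  have hzero1 : ∑ i ∈ T, (Y i - h1 (X i) θhat) = 0 := by
    have := h1key; rw [hd1] at this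
    rcases mul_eq_zero.mp this with h | h
    · exact absurd h (by positivity)
    · exact h
  have hzero0 : ∑ i ∈ C, (Y i - h0 (X i) θhat) = 0 := by
    have := h0key; rw [hd0] at this
    rcases mul_eq_zero.mp this with h | h
    · exact absurd h (by positivity)
    · exact h
  have e1 : (∑ i ∈ T, (Y i - h1 (X i) θhat + (∑ j, h1 (X j) θhat) / (N : ℝ))) / (T.card : ℝ)
      = (∑ i, h1 (X i) θhat) / (N : ℝ) := by
    rw [Finset.sum_add_distrib, hzero1, zero_add, Finset.sum_const, nsmul_eq_mul,
      mul_div_assoc]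
    field_simp
  have e0 : (∑ i ∈ C, (Y i - h0 (X i) θhat + (∑ j, h0 (X j) θhat) / (N : ℝ))) / (C.card : ℝ)
      = (∑ i, h0 (X i) θhat) / (N : ℝ) := by
    rw [Finset.sum_add_distrib, hzero0, zero_add, Finset.sum_const, nsmul_eq_mul,
      mul_div_assoc]
    field_simp
  rw [e1, e0]
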